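/- Let X be a Polish space, Y a compact metric space, E ⊂ X × Y a Borel set all of whose sections E_x = {y : (x,y) ∈ E} are nonempty and compact, and u : X × Y → EReal a Borel function such that for every x ∈ X the map y ↦ u(x,y) is upper semicontinuous on E_x. Then for every probability measure μ on X there exists a function s : X → Y, measurable with respect to the μ-completion of the Borel σ-algebra (in particular AEMeasurable with respect to μ), such that for μ-almost every x one has (x, s(x)) ∈ E and u(x, s(x)) = ⨆_{y ∈ E_x} u(x, y). -/

import Mathlib

open MeasureTheory

noncomputable section

open Set Filter Topology
open scoped ENNReal NNReal

section USC

variable {Y : Type*} [MetricSpace Y]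

/-- Superlevel sets of an u.s.c. function on a compact set are closed. -/
lemma isClosed_usc_level {K : Set Y} (hK : IsCompact K)
    {f : Y → EReal} (hf : UpperSemicontinuousOn f K) (t : EReal) :
    IsClosed {y | y ∈ K ∧ t ≤ f y} := by
  apply IsSeqClosed.isClosed
  intro z y hz hlim
  have hzK : ∀ n, z n ∈ K := fun n => (hz n).1
  have hyK : y ∈ K := hK.isClosed.mem_of_tendsto hlim (Eventually.of_forall hzK)
  refine ⟨hyK, ?_⟩
  by_contra hlt
  push_neg at hlt
  have hev : ∀ᶠ w in 𝓝[K] y, f w < t := hf y hyK t hlt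
  have hten : Tendsto z atTop (𝓝[K] y) :=
    tendsto_nhdsWithin_iff.mpr ⟨hlim, Eventually.of_forall hzK⟩
  obtain ⟨n, hn⟩ := (hten.eventually hev).exists
  exact absurd (hz n).2 (not_le.mpr hn)

/-- An u.s.c. function on a nonempty compact set attains its maximum. -/
lemma usc_exists_max {K : Set Y} (hK : IsCompact K) (hne : K.Nonempty)
    {f : Y → EReal} (hf : UpperSemicontinuousOn f K) :
    ∃ y ∈ K, ∀ z ∈ K, f z ≤ f y := by
  set V := ⨆ z ∈ K, f z with hV
  have hle : ∀ z ∈ K, f z ≤ V := fun z hz => le_iSup₂ (f := fun z (_ : z ∈ K) => f z) z hz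
  rcases isEmpty_or_nonempty {t : EReal // t < V} with hI | hI
  · obtain ⟨y, hy⟩ := hne
    refine ⟨y, hy, fun z hz => (hle z hz).trans ?_⟩
    by_contra h
    exact hI.elim ⟨f y, not_le.mp h⟩
  · set C : {t : EReal // t < V} → Set Y := fun t => {y | y ∈ K ∧ t.1 ≤ f y} with hC
    have hCne : ∀ t, (C t).Nonempty := by
      rintro ⟨t, ht⟩
      rw [hV, lt_iSup_iff] at ht
      obtain ⟨z, hz⟩ := ht
      rw [lt_iSup_iff] at hz
      obtain ⟨hzK, hzt⟩ := hz
      exact ⟨z, hzK, hzt.le⟩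
    have hCcl : ∀ t, IsClosed (C t) := fun t => isClosed_usc_level hK hf t.1
    have hCcpt : ∀ t, IsCompact (C t) :=
      fun t => hK.of_isClosed_subset (hCcl t) (fun y hy => hy.1)
    have hdir : Directed (· ⊇ ·) C := by
      intro a b
      refine ⟨⟨max a.1 b.1, max_lt a.2 b.2⟩, ?_, ?_⟩
      · exact fun y hy => ⟨hy.1, (le_max_left _ _).trans hy.2⟩
      · exact fun y hy => ⟨hy.1, (le_max_right _ _).trans hy.2⟩
    obtain ⟨y, hy⟩ :=
      IsCompact.nonempty_iInter_of_directed_nonempty_isCompact_isClosed C hdir hCne hCcpt hCcl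
    rw [mem_iInter] at hy
    have hyK : y ∈ K := (hy hI.some).1
    have hVy : V ≤ f y := le_of_forall_lt_imp_le_of_dense fun t ht => (hy ⟨t, ht⟩).2
    exact ⟨y, hyK, fun z hz => (hle z hz).trans hVy⟩

end USC

section Capacitability

/-- Auxiliary recursion producing a sequence of bounds. -/
private def iterSeq (F : (ℕ → ℕ) → ℕ → ℕ) : ℕ → (ℕ → ℕ)
  | 0 => fun _ => 0
  | (k + 1) => Function.update (iterSeq F k) k (F (iterSeq F k) k)

variable {X : Type*} [TopologicalSpace X] [PolishSpace X] [MeasurableSpace X] [BorelSpace X]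

/-- Inner regularity by compact sets for analytic sets (capacitability argument). -/
lemma analyticSet_inner_compact (μ : Measure X) [IsFiniteMeasure μ]
    {s : Set X} (hs : AnalyticSet s) {ε : ℝ≥0∞} (hε : ε ≠ 0) :
    ∃ K, K ⊆ s ∧ IsCompact K ∧ μ s ≤ μ K + ε := by
  rw [AnalyticSet_def] at hs
  rcases hs with rfl | ⟨f, f_cont, rfl⟩
  · exact ⟨∅, Subset.rfl, isCompact_empty, by simp⟩
  by_cases hεtop : ε = ⊤
  · refine ⟨{f (fun _ => 0)}, ?_, isCompact_singleton, ?_⟩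
    · simp [mem_range_self]
    · simp [hεtop]
  letI := TopologicalSpace.upgradeIsCompletelyMetrizable X
  set δ : ℕ → ℝ≥0∞ := fun k => ε * 2⁻¹ ^ (k + 1) with hδ
  have hδ0 : ∀ k, δ k ≠ 0 := by
    intro k
    simp only [hδ]
    exact mul_ne_zero hε (pow_ne_zero _ (by simp))
  have hδtop : ∀ k, δ k ≠ ⊤ := by
    intro k
    simp only [hδ]
    exact ENNReal.mul_ne_top hεtop (ENNReal.pow_ne_top (by simp))
  set T : (ℕ → ℕ) → ℕ → Set (ℕ → ℕ) := fun b k => {σ | ∀ j, j < k → σ j ≤ b j} with hT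
  have key : ∀ (b : ℕ → ℕ) (k : ℕ), ∃ n : ℕ,
      μ (f '' T b k) ≤ μ (f '' (T b k ∩ {σ | σ k ≤ n})) + δ k := by
    intro b k
    set A := μ (f '' T b k) with hA
    rcases eq_or_ne A 0 with hA0 | hA0
    · exact ⟨0, by rw [hA0]; exact zero_le⟩
    have hmono : Monotone (fun n : ℕ => T b k ∩ {σ | σ k ≤ n}) :=
      fun m n hmn => inter_subset_inter_right _ (fun σ hσ => le_trans hσ hmn)
    have hunion : (⋃ n, (T b k ∩ {σ | σ k ≤ n})) = T b k := by
      ext σ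
      simp only [mem_iUnion, mem_inter_iff, mem_setOf_eq]
      exact ⟨fun ⟨n, hn, _⟩ => hn, fun h => ⟨σ k, h, le_rfl⟩⟩
    have hm2 : Monotone (fun n : ℕ => f '' (T b k ∩ {σ | σ k ≤ n})) :=
      fun m n h => image_mono (hmono h)
    have hsup : A = ⨆ n, μ (f '' (T b k ∩ {σ | σ k ≤ n})) := by
      rw [hA, ← hm2.measure_iUnion, ← image_iUnion, hunion]
    by_contra hcon
    push_neg at hcon
    have hub : ∀ n, μ (f '' (T b k ∩ {σ | σ k ≤ n})) ≤ A - δ k := by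
      intro n
      exact ENNReal.le_sub_of_add_le_right (hδtop k) (hcon n).le
    have : A ≤ A - δ k := by
      calc A = ⨆ n, μ (f '' (T b k ∩ {σ | σ k ≤ n})) := hsup
        _ ≤ A - δ k := iSup_le hub
    have hAtop : A ≠ ⊤ := measure_ne_top μ _
    exact absurd this (not_le.mpr (ENNReal.sub_lt_self hAtop hA0 (hδ0 k)))
  choose N hN using key
  set g : ℕ → (ℕ → ℕ) := iterSeq N with hg
  have hgsucc : ∀ k, g (k + 1) = Function.update (g k) k (N (g k) k) := fun k => rfl
  set b : ℕ → ℕ := fun k => g (k + 1) k with hb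
  have hgb : ∀ k j, j < k → g k j = b j := by
    intro k
    induction k with
    | zero => intro j hj; omega
    | succ k ih =>
      intro j hj
      rcases Nat.lt_succ_iff_lt_or_eq.mp hj with hj' | rfl
      · have h1 : g (k + 1) j = g k j := by
          rw [hgsucc k]
          exact Function.update_of_ne (by omega) _ _
        rw [h1, ih j hj']
      · rfl
  have hTg : ∀ k, T (g k) k = T b k := by
    intro k
    ext σ
    simp only [hT, mem_setOf_eq]
    constructor
    · intro h j hj
      have := h j hj
      rwa [hgb k j hj] at this
    · intro h j hj
      rw [hgb k j hj]
      exact h j hj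
  have hbk : ∀ k, b k = N (g k) k := by
    intro k
    rw [hb]
    show g (k+1) k = N (g k) k
    rw [hgsucc k]
    exact Function.update_self _ _ _
  have hTsucc : ∀ k, T b (k + 1) = T b k ∩ {σ | σ k ≤ b k} := by
    intro k
    ext σ
    simp only [hT, mem_setOf_eq, mem_inter_iff]
    constructor
    · intro h
      exact ⟨fun j hj => h j (hj.trans (Nat.lt_succ_self k)), h k (Nat.lt_succ_self k)⟩
    · rintro ⟨h1, h2⟩ j hj
      rcases Nat.lt_succ_iff_lt_or_eq.mp hj with hj' | rfl
      · exact h1 j hj'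
      · exact h2
  have hstep : ∀ k, μ (f '' T b k) ≤ μ (f '' T b (k + 1)) + δ k := by
    intro k
    have h := hN (g k) k
    rw [hTg k] at h
    rw [hTsucc k, hbk k]
    exact h
  have htel : ∀ k, μ (f '' T b 0) ≤ μ (f '' T b k) + ∑ j ∈ Finset.range k, δ j := by
    intro k
    induction k with
    | zero => simp
    | succ k ih =>
      calc μ (f '' T b 0) ≤ μ (f '' T b k) + ∑ j ∈ Finset.range k, δ j := ih
        _ ≤ (μ (f '' T b (k + 1)) + δ k) + ∑ j ∈ Finset.range k, δ j :=
            add_le_add_left (hstep k) _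
        _ = μ (f '' T b (k + 1)) + ∑ j ∈ Finset.range (k + 1), δ j := by
            rw [Finset.sum_range_succ]; ring
  have hδsum : ∀ k, ∑ j ∈ Finset.range k, δ j ≤ ε := by
    intro k
    have h1 : ∑ j ∈ Finset.range k, δ j ≤ ∑' j : ℕ, δ j := ENNReal.sum_le_tsum _
    have h2 : ∑' j : ℕ, δ j = ε := by
      simp only [hδ]
      rw [ENNReal.tsum_mul_left]
      have h3 : ∑' j : ℕ, (2⁻¹ : ℝ≥0∞) ^ (j + 1) = (∑' j : ℕ, (2⁻¹ : ℝ≥0∞) ^ j) * 2⁻¹ := by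
        rw [← ENNReal.tsum_mul_right]
        congr 1
        ext j
        rw [pow_succ]
      rw [h3, ENNReal.tsum_geometric, ENNReal.one_sub_inv_two, inv_inv]
      have h4 : (2 : ℝ≥0∞) * 2⁻¹ = 1 := ENNReal.mul_inv_cancel (by norm_num) (by norm_num)
      rw [h4, mul_one]
    rw [← h2]
    exact h1
  have hμk : ∀ k, μ (f '' T b 0) ≤ μ (f '' T b k) + ε :=
    fun k => (htel k).trans (add_le_add_right (hδsum k) _)
  have hT0 : f '' T b 0 = range f := by
    have : T b 0 = univ := by
      ext σ; simp [hT]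
    rw [this, image_univ]
  set K : Set X := f '' (Set.pi univ fun j => Iic (b j)) with hK
  have hKc : IsCompact K :=
    ((isCompact_univ_pi fun j => (Set.finite_Iic (b j)).isCompact).image f_cont)
  have hKs : K ⊆ range f := image_subset_range _ _
  set R : ℕ → Set X := fun k => closure (f '' T b k) with hR
  have hRanti : Antitone R := by
    intro k l hkl
    apply closure_mono
    apply image_mono
    intro σ hσ j hj
    exact hσ j (lt_of_lt_of_le hj hkl)
  have hRmeas : ∀ k, NullMeasurableSet (R k) μ :=
    fun k => isClosed_closure.measurableSet.nullMeasurableSet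
  have hiInt : μ (⋂ k, R k) = ⨅ k, μ (R k) :=
    hRanti.measure_iInter hRmeas ⟨0, measure_ne_top μ _⟩
  have hsub : (⋂ k, R k) ⊆ K := by
    intro x hx
    rw [mem_iInter] at hx
    have hsel : ∀ k : ℕ, ∃ σ, σ ∈ T b k ∧ dist x (f σ) < ((k : ℝ) + 1)⁻¹ := by
      intro k
      have hxk := hx k
      rcases Metric.mem_closure_iff.mp hxk (((k : ℝ) + 1)⁻¹) (by positivity) with ⟨z, hz, hdz⟩
      rcases hz with ⟨σ, hσ, rfl⟩
      exact ⟨σ, hσ, hdz⟩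
    choose σs hσT hσd using hsel
    set c : ℕ → ℕ := fun j => max (b j) (Finset.sup (Finset.range (j + 1)) fun k => σs k j) with hc
    have hmem : ∀ k, σs k ∈ Set.pi univ fun j => Iic (c j) := by
      intro k j _
      rcases lt_or_ge j k with h | h
      · exact le_max_of_le_left (hσT k j h)
      · exact le_max_of_le_right (Finset.le_sup (f := fun k => σs k j)
          (Finset.mem_range.mpr (by omega)))
    obtain ⟨τ, hτ, φ, hφ, hconv⟩ :=
      (isCompact_univ_pi fun j => (Set.finite_Iic (c j)).isCompact).tendsto_subseq hmem
    have hτb : τ ∈ Set.pi univ fun j => Iic (b j) := by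
      intro j _
      have hcoord : Tendsto (fun i => σs (φ i) j) atTop (𝓝 (τ j)) :=
        tendsto_pi_nhds.mp hconv j
      have hev : ∀ᶠ i in atTop, σs (φ i) j = τ j :=
        hcoord ((isOpen_discrete {τ j}).mem_nhds rfl)
      have hev2 : ∀ᶠ i in atTop, σs (φ i) j ≤ b j := by
        filter_upwards [eventually_gt_atTop j] with i hi
        exact hσT (φ i) j (lt_of_lt_of_le hi (hφ.le_apply))
      obtain ⟨i, h1, h2⟩ := (hev.and hev2).exists
      rw [← h1]
      exact h2
    have h1 : Tendsto (fun i => f (σs (φ i))) atTop (𝓝 (f τ)) :=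
      (f_cont.tendsto τ).comp hconv
    have h2 : Tendsto (fun i => f (σs (φ i))) atTop (𝓝 x) := by
      rw [tendsto_iff_dist_tendsto_zero]
      refine squeeze_zero (g := fun i : ℕ => ((i : ℝ) + 1)⁻¹) (fun i => dist_nonneg)
        (fun i => ?_) ?_
      · 
        rw [dist_comm]
        refine (hσd (φ i)).le.trans ?_
        have h5 : i ≤ φ i := hφ.le_apply
        have h6 : (i : ℝ) ≤ (φ i : ℝ) := Nat.cast_le.mpr h5
        exact inv_anti₀ (by positivity) (by linarith)
      · exact tendsto_one_div_add_atTop_nhds_zero_nat.congr (by intro n; rw [one_div])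
    have hfx : f τ = x := tendsto_nhds_unique h1 h2
    exact ⟨τ, hτb, hfx⟩
  refine ⟨K, hKs, hKc, ?_⟩
  have hrange : μ (range f) ≤ μ (⋂ k, R k) + ε := by
    have h4 : ∀ k, μ (range f) ≤ μ (R k) + ε := by
      intro k
      rw [← hT0]
      exact (hμk k).trans (add_le_add_left (measure_mono subset_closure) ε)
    calc μ (range f) ≤ ⨅ k, (μ (R k) + ε) := le_iInf h4
      _ = (⨅ k, μ (R k)) + ε := by
          rw [ENNReal.iInf_add]
      _ = μ (⋂ k, R k) + ε := by rw [hiInt]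
  exact hrange.trans (add_le_add_left (measure_mono hsub) ε)

/-- Analytic sets are null-measurable for any finite Borel measure. -/
lemma analyticSet_nullMeasurableSet {μ : Measure X} [IsFiniteMeasure μ]
    {s : Set X} (hs : AnalyticSet s) : NullMeasurableSet s μ := by
  have h : ∀ n : ℕ, ∃ K, K ⊆ s ∧ IsCompact K ∧ μ s ≤ μ K + ((n : ℝ≥0∞) + 1)⁻¹ := by
    intro n
    exact analyticSet_inner_compact μ hs (ENNReal.inv_ne_zero.mpr (by simp))
  choose K hKs hKc hKμ using h
  set t := ⋃ n, K n with ht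
  have htm : MeasurableSet t := MeasurableSet.iUnion fun n => (hKc n).isClosed.measurableSet
  have hts : t ⊆ s := iUnion_subset hKs
  have h1 : μ s ≤ μ (s ∩ t) := by
    apply ENNReal.le_of_forall_pos_le_add
    intro ε hε _
    obtain ⟨n, hn⟩ := ENNReal.exists_inv_nat_lt (by exact_mod_cast hε.ne' : (ε : ℝ≥0∞) ≠ 0)
    have hn' : ((n : ℝ≥0∞) + 1)⁻¹ ≤ (ε : ℝ≥0∞) := by
      refine le_trans ?_ hn.le
      apply ENNReal.inv_le_inv.mpr
      exact le_self_add.trans (by rw [add_comm])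
    refine (hKμ n).trans ?_
    have : μ (K n) ≤ μ (s ∩ t) :=
      measure_mono (subset_inter (hKs n) (subset_iUnion K n))
    exact add_le_add this hn'
  have h2 : μ (s \ t) = 0 := by
    have heq := measure_inter_add_diff (μ := μ) s htm
    have hle : μ (s ∩ t) + μ (s \ t) ≤ μ (s ∩ t) + 0 := by
      rw [heq, add_zero]
      exact h1
    exact le_zero_iff.mp ((ENNReal.add_le_add_iff_left (measure_ne_top μ _)).mp hle)
  rw [← union_diff_cancel hts]
  exact htm.nullMeasurableSet.union (NullMeasurableSet.of_null h2)

end Capacitability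

section Selection

variable {X Y : Type*} [MeasurableSpace X] [MetricSpace Y]

/-- Nested compact sets obtained by repeated bisection with closed balls. -/
private def selSets (D : ℕ → Y) (r : ℕ → ℝ) (C : X → Set Y) : ℕ → X → Set Y
  | 0 => C
  | (k + 1) => fun x => selSets D r C k x ∩
      Metric.closedBall
        (D (sInf {n | (selSets D r C k x ∩ Metric.closedBall (D n) (r k)).Nonempty})) (r k)

/-- Index of the ball chosen at step `k`. -/
private def selIdx (D : ℕ → Y) (r : ℕ → ℝ) (C : X → Set Y) (k : ℕ) (x : X) : ℕ :=
  sInf {n | (selSets D r C k x ∩ Metric.closedBall (D n) (r k)).Nonempty}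

private lemma selSets_succ (D : ℕ → Y) (r : ℕ → ℝ) (C : X → Set Y) (k : ℕ) (x : X) :
    selSets D r C (k + 1) x =
      selSets D r C k x ∩ Metric.closedBall (D (selIdx D r C k x)) (r k) := rfl

private def selP (D : ℕ → Y) (r : ℕ → ℝ) (σ : ℕ → ℕ) (k : ℕ) : Set Y :=
  ⋂ j ∈ Finset.range k, Metric.closedBall (D (σ j)) (r j)

private def selA (D : ℕ → Y) (r : ℕ → ℝ) (C : X → Set Y) (k : ℕ) (σ : ℕ → ℕ) : Set X :=
  {x | ∀ j, j < k → selIdx D r C j x = σ j}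

variable {D : ℕ → Y} {r : ℕ → ℝ} {C : X → Set Y}

private lemma selP_closed (k : ℕ) (σ : ℕ → ℕ) : IsClosed (selP D r σ k) :=
  isClosed_biInter fun j _ => Metric.isClosed_closedBall

private lemma selP_succ (k : ℕ) (σ : ℕ → ℕ) :
    selP D r σ (k + 1) = selP D r σ k ∩ Metric.closedBall (D (σ k)) (r k) := by
  simp only [selP, Finset.range_add_one]
  rw [Finset.set_biInter_insert]
  rw [inter_comm]

private lemma selSets_invariant (hD : DenseRange D) (hr : ∀ k, 0 < r k)
    (hne : ∀ x, (C x).Nonempty) (hcpt : ∀ x, IsCompact (C x)) :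
    ∀ k x, (selSets D r C k x).Nonempty ∧ IsCompact (selSets D r C k x) := by
  intro k x
  induction k with
  | zero => exact ⟨hne x, hcpt x⟩
  | succ k ih =>
    obtain ⟨⟨y, hy⟩, hc⟩ := ih
    have hex : {n | (selSets D r C k x ∩ Metric.closedBall (D n) (r k)).Nonempty}.Nonempty := by
      rcases Metric.mem_closure_range_iff.mp (hD y) (r k) (hr k) with ⟨n, hn⟩
      exact ⟨n, y, hy, Metric.mem_closedBall.mpr hn.le⟩
    have hmem := Nat.sInf_mem hex
    constructor
    · exact hmem
    · exact hc.inter_right Metric.isClosed_closedBall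

private lemma selSets_eq_on_selA :
    ∀ k (σ : ℕ → ℕ) x, x ∈ selA D r C k σ → selSets D r C k x = C x ∩ selP D r σ k := by
  intro k
  induction k with
  | zero =>
    intro σ x _
    simp [selSets, selP]
  | succ k ih =>
    intro σ x hx
    have hx' : x ∈ selA D r C k σ := fun j hj => hx j (hj.trans (Nat.lt_succ_self k))
    have hIk : selIdx D r C k x = σ k := hx k (Nat.lt_succ_self k)
    rw [selSets_succ, ih σ x hx', hIk, selP_succ, inter_assoc]

private lemma selA_measurable (hD : DenseRange D) (hr : ∀ k, 0 < r k)
    (hne : ∀ x, (C x).Nonempty) (hcpt : ∀ x, IsCompact (C x))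
    (hmeas : ∀ B : Set Y, IsClosed B → MeasurableSet {x | (C x ∩ B).Nonempty}) :
    ∀ k (σ : ℕ → ℕ), MeasurableSet (selA D r C k σ) := by
  intro k
  induction k with
  | zero =>
    intro σ
    have : selA D r C 0 σ = univ := by
      ext x; simp [selA]
    rw [this]
    exact MeasurableSet.univ
  | succ k ih =>
    intro σ
    have hsplit : selA D r C (k + 1) σ = selA D r C k σ ∩
        ({x | (C x ∩ (selP D r σ k ∩ Metric.closedBall (D (σ k)) (r k))).Nonempty} \
          ⋃ m ∈ {m : ℕ | m < σ k},
            {x | (C x ∩ (selP D r σ k ∩ Metric.closedBall (D m) (r k))).Nonempty}) := by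
      ext x
      simp only [mem_inter_iff, mem_diff, mem_iUnion, mem_setOf_eq, not_exists, exists_prop]
      constructor
      · intro hx
        have hxk : x ∈ selA D r C k σ := fun j hj => hx j (hj.trans (Nat.lt_succ_self k))
        have hKxk : selSets D r C k x = C x ∩ selP D r σ k := selSets_eq_on_selA k σ x hxk
        have hIx : selIdx D r C k x = σ k := hx k (Nat.lt_succ_self k)
        have hne' : (selSets D r C (k + 1) x).Nonempty :=
          (selSets_invariant hD hr hne hcpt (k + 1) x).1
        rw [selSets_succ, hKxk, hIx, inter_assoc] at hne'
        refine ⟨hxk, hne', ?_⟩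
        intro m hm
        obtain ⟨hmlt, hmem⟩ := hm
        rw [← inter_assoc, ← hKxk] at hmem
        have hmS : m ∈ {n | (selSets D r C k x ∩ Metric.closedBall (D n) (r k)).Nonempty} := hmem
        have : selIdx D r C k x ≤ m := Nat.sInf_le hmS
        omega
      · rintro ⟨hxk, hpos, hneg⟩
        intro j hj
        rcases Nat.lt_succ_iff_lt_or_eq.mp hj with hj' | rfl
        · exact hxk j hj'
        have hKxk : selSets D r C j x = C x ∩ selP D r σ j := selSets_eq_on_selA j σ x hxk
        have hσS : σ j ∈ {n | (selSets D r C j x ∩ Metric.closedBall (D n) (r j)).Nonempty} := by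
          rw [mem_setOf_eq, hKxk, inter_assoc]
          exact hpos
        refine le_antisymm (Nat.sInf_le hσS) (le_of_not_gt fun hlt => ?_)
        have hmem : (selSets D r C j x ∩
            Metric.closedBall (D (selIdx D r C j x)) (r j)).Nonempty :=
          Nat.sInf_mem ⟨σ j, hσS⟩
        rw [hKxk, inter_assoc] at hmem
        exact hneg (selIdx D r C j x) ⟨hlt, hmem⟩
    rw [hsplit]
    refine (ih σ).inter (MeasurableSet.diff ?_ ?_)
    · exact hmeas _ ((selP_closed k σ).inter Metric.isClosed_closedBall)
    · exact MeasurableSet.biUnion (Set.to_countable _)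
        (fun m _ => hmeas _ ((selP_closed k σ).inter Metric.isClosed_closedBall))

/-- Measurable selection from a compact-set-valued map whose closed hitting sets
are measurable. -/
lemma selection_aux [CompactSpace Y] [MeasurableSpace Y] [BorelSpace Y]
    (C : X → Set Y) (hne : ∀ x, (C x).Nonempty) (hcpt : ∀ x, IsCompact (C x))
    (hmeas : ∀ B : Set Y, IsClosed B → MeasurableSet {x | (C x ∩ B).Nonempty}) :
    ∃ s : X → Y, Measurable s ∧ ∀ x, s x ∈ C x := by
  rcases isEmpty_or_nonempty X with hX | hX
  · exact ⟨fun x => (hne x).choose, Subsingleton.measurable, fun x => (hne x).choose_spec⟩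
  haveI : Nonempty Y := ⟨(hne (Classical.arbitrary X)).choose⟩
  set D : ℕ → Y := TopologicalSpace.denseSeq Y with hD
  have hDdense : DenseRange D := TopologicalSpace.denseRange_denseSeq Y
  set r : ℕ → ℝ := fun k => (2⁻¹ : ℝ) ^ k with hr
  have hrpos : ∀ k, 0 < r k := fun k => pow_pos (by norm_num) k
  have hinv := selSets_invariant (D := D) (r := r) (C := C) hDdense hrpos hne hcpt
  have hanti : ∀ x, Antitone (fun k => selSets D r C k x) := by
    intro x
    apply antitone_nat_of_succ_le
    intro k
    rw [selSets_succ]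
    exact inter_subset_left
  have hzall : ∀ x, (⋂ k, selSets D r C k x).Nonempty := by
    intro x
    apply IsCompact.nonempty_iInter_of_directed_nonempty_isCompact_isClosed
    · intro a b
      exact ⟨max a b, hanti x (le_max_left a b), hanti x (le_max_right a b)⟩
    · exact fun k => (hinv k x).1
    · exact fun k => (hinv k x).2
    · exact fun k => (hinv k x).2.isClosed
  choose s hs using hzall
  have hsC : ∀ x, s x ∈ C x := fun x => mem_iInter.mp (hs x) 0
  have hIfiber : ∀ k m, MeasurableSet {x | selIdx D r C k x = m} := by
    intro k m
    have heq : {x | selIdx D r C k x = m} =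
        ⋃ v : Fin k → ℕ, selA D r C (k + 1) (fun j => if h : j < k then v ⟨j, h⟩ else m) := by
      ext x
      simp only [mem_iUnion, mem_setOf_eq, selA]
      constructor
      · intro hm
        refine ⟨fun j => selIdx D r C (j : ℕ) x, fun j hj => ?_⟩
        rcases Nat.lt_succ_iff_lt_or_eq.mp hj with hj' | rfl
        · rw [dif_pos hj']
        · rw [dif_neg (lt_irrefl _)]
          exact hm
      · rintro ⟨v, hv⟩
        have := hv k (Nat.lt_succ_self k)
        rwa [dif_neg (lt_irrefl _)] at this
    rw [heq]
    exact MeasurableSet.iUnion fun v =>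
      selA_measurable hDdense hrpos hne hcpt hmeas (k + 1) _
  have hImeas : ∀ k, Measurable (fun x => selIdx D r C k x) :=
    fun k => measurable_to_nat (fun y => hIfiber k (selIdx D r C k y))
  have happrox : ∀ k, Measurable (fun x => D (selIdx D r C k x)) :=
    fun k => measurable_from_nat.comp (hImeas k)
  have hdist : ∀ k x, dist (s x) (D (selIdx D r C k x)) ≤ r k := by
    intro k x
    have hmem : s x ∈ selSets D r C (k + 1) x := mem_iInter.mp (hs x) (k + 1)
    rw [selSets_succ] at hmem
    exact Metric.mem_closedBall.mp hmem.2
  have htend : Tendsto (fun k => fun x => D (selIdx D r C k x)) atTop (𝓝 s) := by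
    rw [tendsto_pi_nhds]
    intro x
    rw [tendsto_iff_dist_tendsto_zero]
    apply squeeze_zero (fun k => dist_nonneg) (g := r)
    · intro k
      rw [dist_comm]
      exact hdist k x
    · exact tendsto_pow_atTop_nhds_zero_of_lt_one (by norm_num) (by norm_num)
  exact ⟨s, measurable_of_tendsto_metrizable happrox htend, hsC⟩

end Selection

/-- Measurable selection of fiberwise maximizers: if the sections of the
Borel set `E` are nonempty and compact and `u` is fiberwise upper semicontinuous on them,
then for every probability measure `μ` on `X` there is a `μ`-a.e. defined measurable
selection `s` attaining the fiberwise supremum. -/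
theorem measurable_selection_of_fiberwise_max
    {X Y : Type*}
    [TopologicalSpace X] [PolishSpace X] [MeasurableSpace X] [BorelSpace X]
    [MetricSpace Y] [CompactSpace Y] [MeasurableSpace Y] [BorelSpace Y]
    (E : Set (X × Y)) (hE : MeasurableSet E)
    (hE_ne : ∀ x : X, ({y : Y | (x, y) ∈ E}).Nonempty)
    (hE_cpt : ∀ x : X, IsCompact {y : Y | (x, y) ∈ E})
    (u : X × Y → EReal) (hu : Measurable u)
    (hu_usc : ∀ x : X, UpperSemicontinuousOn (fun y => u (x, y)) {y : Y | (x, y) ∈ E}) :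
    ∀ μ : Measure X, IsProbabilityMeasure μ →
      ∃ s : X → Y, AEMeasurable s μ ∧
        ∀ᵐ x ∂μ, (x, s x) ∈ E ∧
          u (x, s x) = ⨆ y ∈ {y : Y | (x, y) ∈ E}, u (x, y) := by
  intro μ hμ
  haveI : IsFiniteMeasure μ := inferInstance
  -- the value function and the argmax sets
  have hmaxE : ∀ x, ∃ y ∈ {y : Y | (x, y) ∈ E},
      ∀ z ∈ {y : Y | (x, y) ∈ E}, u (x, z) ≤ u (x, y) :=
    fun x => usc_exists_max (hE_cpt x) (hE_ne x) (hu_usc x)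
  set V : X → EReal := fun x => ⨆ y ∈ {y : Y | (x, y) ∈ E}, u (x, y) with hV
  have hleV : ∀ x y, (x, y) ∈ E → u (x, y) ≤ V x :=
    fun x y hy => le_iSup₂ (f := fun y (_ : y ∈ {y : Y | (x, y) ∈ E}) => u (x, y)) y hy
  have hVeq : ∀ x y, (x, y) ∈ E →
      (∀ z ∈ {y' : Y | (x, y') ∈ E}, u (x, z) ≤ u (x, y)) → u (x, y) = V x := by
    intro x y hy hmax
    exact le_antisymm (hleV x y hy) (iSup₂_le hmax)
  set G : X → Set Y := fun x => {y | (x, y) ∈ E ∧ u (x, y) = V x} with hG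
  have hGne : ∀ x, (G x).Nonempty := by
    intro x
    obtain ⟨y, hy, hmax⟩ := hmaxE x
    exact ⟨y, hy, hVeq x y hy hmax⟩
  have hGalt : ∀ x, G x = {y | y ∈ {y' : Y | (x, y') ∈ E} ∧ V x ≤ u (x, y)} := by
    intro x
    ext y
    simp only [hG, mem_setOf_eq]
    constructor
    · rintro ⟨h1, h2⟩
      exact ⟨h1, h2.ge⟩
    · rintro ⟨h1, h2⟩
      exact ⟨h1, le_antisymm (hleV x y h1) h2⟩
  have hGcpt : ∀ x, IsCompact (G x) := by
    intro x
    rw [hGalt x]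
    exact (hE_cpt x).of_isClosed_subset
      (isClosed_usc_level (hE_cpt x) (hu_usc x) (V x)) (fun y hy => hy.1)
  -- analytic projections are null-measurable
  have himg : ∀ (B : Set (X × Y)), MeasurableSet B →
      NullMeasurableSet (Prod.fst '' B) μ := by
    intro B hB
    exact analyticSet_nullMeasurableSet (hB.analyticSet_image measurable_fst)
  set W : Set Y → ℚ → Set X :=
    fun B q => {x | ∃ y ∈ B, (x, y) ∈ E ∧ ((q : ℝ) : EReal) ≤ u (x, y)} with hW
  have hWmeas : ∀ B : Set Y, MeasurableSet B → ∀ q : ℚ, NullMeasurableSet (W B q) μ := by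
    intro B hB q
    have heq : W B q =
        Prod.fst '' (E ∩ (univ ×ˢ B) ∩ {p : X × Y | ((q : ℝ) : EReal) ≤ u p}) := by
      ext x
      simp only [hW, mem_setOf_eq, mem_image, mem_inter_iff, mem_prod, mem_univ, true_and]
      constructor
      · rintro ⟨y, hyB, hyE, hyu⟩
        exact ⟨(x, y), ⟨⟨hyE, hyB⟩, hyu⟩, rfl⟩
      · rintro ⟨⟨x', y⟩, ⟨⟨hyE, hyB⟩, hyu⟩, rfl⟩
        exact ⟨y, hyB, hyE, hyu⟩
    rw [heq]
    refine himg _ ((hE.inter (MeasurableSet.univ.prod hB)).inter ?_)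
    exact measurableSet_le measurable_const hu
  set Nne : Set Y → Set X := fun B => {x | ∃ y ∈ B, (x, y) ∈ E} with hNne
  have hNmeas : ∀ B : Set Y, MeasurableSet B → NullMeasurableSet (Nne B) μ := by
    intro B hB
    have heq : Nne B = Prod.fst '' (E ∩ (univ ×ˢ B)) := by
      ext x
      simp only [hNne, mem_setOf_eq, mem_image, mem_inter_iff, mem_prod, mem_univ, true_and]
      constructor
      · rintro ⟨y, hyB, hyE⟩
        exact ⟨(x, y), ⟨hyE, hyB⟩, rfl⟩
      · rintro ⟨⟨x', y⟩, ⟨hyE, hyB⟩, rfl⟩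
        exact ⟨y, hyB, hyE⟩
    rw [heq]
    exact himg _ (hE.inter (MeasurableSet.univ.prod hB))
  have hVq : ∀ q : ℚ, {x | ((q : ℝ) : EReal) ≤ V x} = W univ q := by
    intro q
    ext x
    simp only [hW, mem_setOf_eq, mem_univ, true_and]
    constructor
    · intro hq
      obtain ⟨y, hy, hmax⟩ := hmaxE x
      refine ⟨y, hy, ?_⟩
      rw [hVeq x y hy hmax]
      exact hq
    · rintro ⟨y, hyE, hyu⟩
      exact hyu.trans (hleV x y hyE)
  -- the hitting sets of the argmax correspondence are null-measurable
  have hGhit : ∀ B : Set Y, IsClosed B → NullMeasurableSet {x | (G x ∩ B).Nonempty} μ := by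
    intro B hBc
    have hBm := hBc.measurableSet
    have hkey : {x | (G x ∩ B).Nonempty} =
        Nne B ∩ ⋂ q : ℚ, ({x | ((q : ℝ) : EReal) ≤ V x}ᶜ ∪ W B q) := by
      ext x
      simp only [mem_inter_iff, mem_iInter, mem_union, mem_compl_iff, mem_setOf_eq, hG, hW,
        hNne]
      constructor
      · rintro ⟨y, ⟨hyE, hyV⟩, hyB⟩
        refine ⟨⟨y, hyB, hyE⟩, fun q => ?_⟩
        by_cases hq : ((q : ℝ) : EReal) ≤ V x
        · right
          refine ⟨y, hyB, hyE, ?_⟩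
          rw [hyV]
          exact hq
        · left
          exact hq
      · rintro ⟨⟨y0, hy0B, hy0E⟩, hq⟩
        have hEB : IsCompact ({y : Y | (x, y) ∈ E} ∩ B) := (hE_cpt x).inter_right hBc
        have hEBne : ({y : Y | (x, y) ∈ E} ∩ B).Nonempty := ⟨y0, hy0E, hy0B⟩
        obtain ⟨y, ⟨hyE, hyB⟩, hymax⟩ :=
          usc_exists_max hEB hEBne ((hu_usc x).mono inter_subset_left)
        refine ⟨y, ⟨hyE, ?_⟩, hyB⟩
        refine le_antisymm (hleV x y hyE) ?_
        by_contra hlt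
        push_neg at hlt
        obtain ⟨q, hq1, hq2⟩ := EReal.exists_rat_btwn_of_lt hlt
        rcases hq q with hL | hR
        · exact hL hq2.le
        · obtain ⟨z, hzB, hzE, hzu⟩ := hR
          exact absurd (hymax z ⟨hzE, hzB⟩) (not_le.mpr (lt_of_lt_of_le hq1 hzu))
    rw [hkey]
    refine (hNmeas B hBm).inter (NullMeasurableSet.iInter fun q => ?_)
    refine NullMeasurableSet.union ?_ (hWmeas B hBm q)
    rw [hVq q]
    exact (hWmeas univ MeasurableSet.univ q).compl
  -- apply the abstract selection lemma with the completed σ-algebra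
  obtain ⟨s, hs_meas, hsG⟩ :=
    @selection_aux X Y (@NullMeasurableSpace.instMeasurableSpace X _ μ) _ _ _ _
      G hGne hGcpt (fun B hB => hGhit B hB)
  refine ⟨s, ?_, Eventually.of_forall fun x => ⟨(hsG x).1, (hsG x).2⟩⟩
  have hnm : NullMeasurable s μ := hs_meas
  exact hnm.aemeasurable
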